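/- Let δ > 0 and let ζ : (−δ, δ) → ℝ be a C² function satisfying 2ζ(s)ζ''(s) − 4ζ'(s)² = 1 for all s ∈ (−δ, δ), with ζ(0) > 0 and ζ'(0) = 0. Define w(y, s) = y²·ζ(s) for (y, s) ∈ ℝ². Then there exists c₀ > 0 such that w is convex on the open ball B_{c₀}(0) ⊆ ℝ² and the determinant of the Hessian of w satisfies det D²w(y, s) = y² for all (y, s) ∈ B_{c₀}(0). -/

import Mathlib

open Set

noncomputable section

set_option maxHeartbeats 1000000

lemma statement_19_ball_convex (c : ℝ) :
    Convex ℝ {p : ℝ × ℝ | p.1 ^ 2 + p.2 ^ 2 < c ^ 2} := by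
  have h1 : ConvexOn ℝ (univ : Set (ℝ × ℝ)) (fun p : ℝ × ℝ => p.1 ^ 2) := by
    have := (Even.convexOn_pow (𝕜 := ℝ) even_two).comp_linearMap
      (LinearMap.fst ℝ ℝ ℝ)
    exact this
  have h2 : ConvexOn ℝ (univ : Set (ℝ × ℝ)) (fun p : ℝ × ℝ => p.2 ^ 2) := by
    have := (Even.convexOn_pow (𝕜 := ℝ) even_two).comp_linearMap
      (LinearMap.snd ℝ ℝ ℝ)
    exact this
  have := (h1.add h2).convex_lt (c ^ 2)
  simpa using this

/-- Example A.2 (Example `exa:2 SW`, after Sawyer–Wheeden): if `ζ` solves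
`2ζζ'' − 4ζ'² = 1` with `ζ(0) > 0`, `ζ'(0) = 0`, then `w(y,s) = y²ζ(s)` is convex near
the origin and `det D²w(y,s) = y²` there. -/
theorem statement_19 (δ : ℝ) (hδ : 0 < δ) (ζ : ℝ → ℝ)
    (hζC2 : ContDiffOn ℝ 2 ζ (Set.Ioo (-δ) δ))
    (hode : ∀ s ∈ Set.Ioo (-δ) δ, 2 * ζ s * deriv (deriv ζ) s - 4 * (deriv ζ s) ^ 2 = 1)
    (hζ0 : 0 < ζ 0) (hζ'0 : deriv ζ 0 = 0)
    (w : ℝ × ℝ → ℝ) (hw : ∀ p : ℝ × ℝ, w p = p.1 ^ 2 * ζ p.2) :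
    ∃ c₀ : ℝ, 0 < c₀ ∧
      ConvexOn ℝ {p : ℝ × ℝ | p.1 ^ 2 + p.2 ^ 2 < c₀ ^ 2} w ∧
      ∀ p : ℝ × ℝ, p.1 ^ 2 + p.2 ^ 2 < c₀ ^ 2 →
        (deriv (fun y => deriv (fun y' => w (y', p.2)) y) p.1) *
            (deriv (fun s => deriv (fun s' => w (p.1, s')) s) p.2) -
          (deriv (fun y => deriv (fun s => w (y, s)) p.2) p.1) ^ 2 = p.1 ^ 2 := by
  have hIopen : IsOpen (Set.Ioo (-δ) δ) := isOpen_Ioo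
  have h0I : (0 : ℝ) ∈ Set.Ioo (-δ) δ := ⟨by linarith, hδ⟩
  -- basic differentiability facts
  have hζdiff : ∀ s ∈ Set.Ioo (-δ) δ, DifferentiableAt ℝ ζ s := fun s hs =>
    ((hζC2.differentiableOn (by norm_num)).differentiableAt (hIopen.mem_nhds hs))
  have hζ'cd : ContDiffOn ℝ 1 (deriv ζ) (Set.Ioo (-δ) δ) :=
    hζC2.deriv_of_isOpen hIopen (by norm_num)
  have hζ'diff : ∀ s ∈ Set.Ioo (-δ) δ, DifferentiableAt ℝ (deriv ζ) s := fun s hs =>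
    ((hζ'cd.differentiableOn one_ne_zero).differentiableAt (hIopen.mem_nhds hs))
  have hζcont : ContinuousAt ζ 0 :=
    (hζC2.continuousOn.continuousAt (hIopen.mem_nhds h0I))
  -- choose ε with ζ > 0 and inside Ioo
  have hev : ∀ᶠ s in nhds (0 : ℝ), 0 < ζ s ∧ s ∈ Set.Ioo (-δ) δ :=
    (hζcont.eventually (eventually_gt_nhds hζ0)).and
      (hIopen.mem_nhds h0I)
  obtain ⟨ε, hε, hεball⟩ := Metric.eventually_nhds_iff.1 hev
  have hball : ∀ y s : ℝ, y ^ 2 + s ^ 2 < (ε / 2) ^ 2 →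
      0 < ζ s ∧ s ∈ Set.Ioo (-δ) δ := by
    intro y s hp
    have h2 : s ^ 2 < ε ^ 2 := by nlinarith [sq_nonneg y]
    have habs : |s| < ε := abs_lt_of_sq_lt_sq h2 hε.le
    exact hεball (by simpa [Real.dist_eq] using habs)
  refine ⟨ε / 2, by positivity, ?_, ?_⟩
  · -- Convexity
    have hconv := statement_19_ball_convex (ε / 2)
    refine ⟨hconv, ?_⟩
    intro x hx z hz a b ha hb hab
    -- reduce to a 1-dimensional convexity statement along the segment
    set d : ℝ × ℝ := z - x with hd
    set g : ℝ → ℝ := fun t => (x.1 + t * d.1) ^ 2 * ζ (x.2 + t * d.2) with hg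
    have ha' : a = 1 - b := by linarith
    have hmem : ∀ t ∈ Set.Icc (0 : ℝ) 1,
        (x.1 + t * d.1) ^ 2 + (x.2 + t * d.2) ^ 2 < (ε / 2) ^ 2 := by
      intro t ht
      have hpt : x + t • d ∈ {p : ℝ × ℝ | p.1 ^ 2 + p.2 ^ 2 < (ε / 2) ^ 2} := by
        have heq : x + t • d = (1 - t) • x + t • z := by
          rw [hd]; module
        rw [heq]
        exact hconv hx hz (by linarith [ht.1, ht.2]) ht.1 (by ring)
      simpa [hd] using hpt
    -- derivative formulas
    set G : ℝ → ℝ := fun t => 2 * (x.1 + t * d.1) * d.1 * ζ (x.2 + t * d.2)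
      + (x.1 + t * d.1) ^ 2 * (deriv ζ (x.2 + t * d.2) * d.2) with hG
    set G2 : ℝ → ℝ := fun t => (2 * d.1 * d.1 * ζ (x.2 + t * d.2)
      + 2 * (x.1 + t * d.1) * d.1 * (deriv ζ (x.2 + t * d.2) * d.2))
      + ((2 * (x.1 + t * d.1) * d.1) * (deriv ζ (x.2 + t * d.2) * d.2)
      + (x.1 + t * d.1) ^ 2 * (deriv (deriv ζ) (x.2 + t * d.2) * d.2 * d.2)) with hG2
    have haff : ∀ t : ℝ, HasDerivAt (fun u => x.2 + u * d.2) d.2 t := by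
      intro t
      simpa [mul_comm] using ((hasDerivAt_id t).const_mul d.2).const_add x.2
    have haff1 : ∀ t : ℝ, HasDerivAt (fun u => x.1 + u * d.1) d.1 t := by
      intro t
      simpa [mul_comm] using ((hasDerivAt_id t).const_mul d.1).const_add x.1
    have hsmem : ∀ t ∈ Set.Icc (0 : ℝ) 1, (x.2 + t * d.2) ∈ Set.Ioo (-δ) δ ∧
        0 < ζ (x.2 + t * d.2) := by
      intro t ht
      have := hball _ _ (hmem t ht)
      exact ⟨this.2, this.1⟩
    have hgderiv0 : ∀ t : ℝ, (x.2 + t * d.2) ∈ Set.Ioo (-δ) δ → HasDerivAt g (G t) t := by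
      intro t ht
      have hz1 : HasDerivAt (fun u => ζ (x.2 + u * d.2))
          (deriv ζ (x.2 + t * d.2) * d.2) t :=
        ((hζdiff _ ht).hasDerivAt).comp t (haff t)
      have hy1 : HasDerivAt (fun u => (x.1 + u * d.1) ^ 2)
          (2 * (x.1 + t * d.1) * d.1) t := by
        simpa [mul_comm, mul_assoc] using ((haff1 t).fun_pow 2)
      simpa [hG, hg] using hy1.fun_mul hz1
    have hGderiv : ∀ t ∈ Set.Icc (0 : ℝ) 1, HasDerivAt G (G2 t) t := by
      intro t ht
      have hmemt := (hsmem t ht).1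
      have hz1 : HasDerivAt (fun u => ζ (x.2 + u * d.2))
          (deriv ζ (x.2 + t * d.2) * d.2) t :=
        ((hζdiff _ hmemt).hasDerivAt).comp t (haff t)
      have hz2 : HasDerivAt (fun u => deriv ζ (x.2 + u * d.2))
          (deriv (deriv ζ) (x.2 + t * d.2) * d.2) t :=
        by have h' := (hζ'diff _ hmemt).hasDerivAt; exact h'.comp t (haff t)
      have hy1 : HasDerivAt (fun u => (x.1 + u * d.1) ^ 2)
          (2 * (x.1 + t * d.1) * d.1) t := by
        simpa [mul_comm, mul_assoc] using ((haff1 t).fun_pow 2)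
      have hy0 : HasDerivAt (fun u => 2 * (x.1 + u * d.1) * d.1)
          (2 * d.1 * d.1) t := by
        simpa [mul_comm, mul_assoc, mul_left_comm] using
          (((haff1 t).const_mul 2).mul_const d.1)
      have h1 : HasDerivAt (fun u => 2 * (x.1 + u * d.1) * d.1 * ζ (x.2 + u * d.2))
          (2 * d.1 * d.1 * ζ (x.2 + t * d.2)
            + 2 * (x.1 + t * d.1) * d.1 * (deriv ζ (x.2 + t * d.2) * d.2)) t :=
        hy0.mul hz1
      have h2 : HasDerivAt
          (fun u => (x.1 + u * d.1) ^ 2 * (deriv ζ (x.2 + u * d.2) * d.2))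
          ((2 * (x.1 + t * d.1) * d.1) * (deriv ζ (x.2 + t * d.2) * d.2)
            + (x.1 + t * d.1) ^ 2 * (deriv (deriv ζ) (x.2 + t * d.2) * d.2 * d.2)) t :=
        hy1.mul (hz2.mul_const d.2)
      exact h1.add h2
    -- g is convex on [0,1]
    have hU : IsOpen {t : ℝ | (x.1 + t * d.1) ^ 2 + (x.2 + t * d.2) ^ 2 < (ε / 2) ^ 2} := by
      have hc : Continuous fun t : ℝ => (x.1 + t * d.1) ^ 2 + (x.2 + t * d.2) ^ 2 :=
        (((continuous_const.add ((continuous_id').mul continuous_const)).pow 2).add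
          ((continuous_const.add ((continuous_id').mul continuous_const)).pow 2))
      exact isOpen_lt hc continuous_const
    have hderiv_eq : ∀ t ∈ Set.Icc (0 : ℝ) 1, deriv g =ᶠ[nhds t] G := by
      intro t ht
      filter_upwards [hU.mem_nhds (hmem t ht)] with u hu
      exact (hgderiv0 u (hball _ _ hu).2).deriv
    have hgconv : ConvexOn ℝ (Set.Icc (0:ℝ) 1) g := by
      apply convexOn_of_deriv2_nonneg (convex_Icc 0 1)
      · intro t ht
        exact (hgderiv0 t (hsmem t ht).1).continuousAt.continuousWithinAt
      · intro t ht
        exact ((hgderiv0 t (hsmem t (interior_subset ht)).1).differentiableAt).differentiableWithinAt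
      · intro t ht
        have ht' : t ∈ Set.Icc (0:ℝ) 1 := interior_subset ht
        have : DifferentiableAt ℝ G t := (hGderiv t ht').differentiableAt
        exact (this.congr_of_eventuallyEq (hderiv_eq t ht')).differentiableWithinAt
      · intro t ht
        have ht' : t ∈ Set.Icc (0:ℝ) 1 := interior_subset ht
        have hd2 : deriv (deriv g) t = G2 t := by
          rw [Filter.EventuallyEq.deriv_eq (hderiv_eq t ht')]
          exact (hGderiv t ht').deriv
        have key : 0 ≤ G2 t := by
          have hs := hsmem t ht'
          have hode' := hode _ hs.1
          have hZpos : 0 < ζ (x.2 + t * d.2) := hs.2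
          have expand : 2 * ζ (x.2 + t * d.2) * G2 t =
              (2 * ζ (x.2 + t * d.2) * d.1
                + 2 * (x.1 + t * d.1) * deriv ζ (x.2 + t * d.2) * d.2) ^ 2
              + (2 * ζ (x.2 + t * d.2) * deriv (deriv ζ) (x.2 + t * d.2)
                  - 4 * (deriv ζ (x.2 + t * d.2)) ^ 2)
                * ((x.1 + t * d.1) * d.2) ^ 2 := by
            simp only [hG2]; ring
          rw [hode', one_mul] at expand
          nlinarith [sq_nonneg (2 * ζ (x.2 + t * d.2) * d.1
            + 2 * (x.1 + t * d.1) * deriv ζ (x.2 + t * d.2) * d.2),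
            sq_nonneg ((x.1 + t * d.1) * d.2), expand, hZpos]
        simp only [Function.iterate_succ, Function.iterate_zero, Function.comp,
          Function.id_def]
        rw [hd2]
        exact key
    -- conclude
    have hcx := hgconv.2 (Set.left_mem_Icc.2 zero_le_one) (Set.right_mem_Icc.2 zero_le_one)
      ha hb hab
    have hpt : a • x + b • z = x + b • d := by
      rw [hd, ha']; module
    have h0 : g 0 = w x := by simp [hg, hw]
    have h1 : g 1 = w z := by
      simp only [hg, hw, hd, one_mul, Prod.fst_sub, Prod.snd_sub, add_sub_cancel]
    have hgb : g b = w (a • x + b • z) := by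
      rw [hpt, hw]
      simp [hg, hd]
    rw [h0, h1] at hcx
    simpa [hgb, smul_eq_mul] using hcx
  · -- determinant computation
    intro p hp
    have hpI : p.2 ∈ Set.Ioo (-δ) δ := (hball _ _ hp).2
    -- w_yy
    have e1' : (fun y => deriv (fun y' => w (y', p.2)) y) = fun y => 2 * y * ζ p.2 := by
      funext y
      have e1 : (fun y' => w (y', p.2)) = fun y' => y' ^ 2 * ζ p.2 := by
        funext y'; exact hw (y', p.2)
      rw [e1]
      have : HasDerivAt (fun y' : ℝ => y' ^ 2 * ζ p.2) (2 * y * ζ p.2) y := by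
        simpa [mul_comm, mul_assoc] using (hasDerivAt_pow 2 y).mul_const (ζ p.2)
      exact this.deriv
    have f1 : deriv (fun y => deriv (fun y' => w (y', p.2)) y) p.1 = 2 * ζ p.2 := by
      rw [e1']
      have : HasDerivAt (fun y : ℝ => 2 * y * ζ p.2) (2 * ζ p.2) p.1 := by
        have := ((hasDerivAt_id p.1).const_mul 2).mul_const (ζ p.2)
        simpa [mul_comm, mul_assoc] using this
      exact this.deriv
    -- w_ss
    have f2 : deriv (fun s => deriv (fun s' => w (p.1, s')) s) p.2
        = p.1 ^ 2 * deriv (deriv ζ) p.2 := by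
      have heq : (fun s => deriv (fun s' => w (p.1, s')) s)
          =ᶠ[nhds p.2] fun s => p.1 ^ 2 * deriv ζ s := by
        filter_upwards [hIopen.mem_nhds hpI] with s hs
        have e2 : (fun s' => w (p.1, s')) = fun s' => p.1 ^ 2 * ζ s' := by
          funext s'; exact hw (p.1, s')
        rw [e2]
        exact deriv_const_mul _ (hζdiff s hs)
      rw [Filter.EventuallyEq.deriv_eq heq]
      exact deriv_const_mul _ (hζ'diff _ hpI)
    -- w_ys
    have f3 : deriv (fun y => deriv (fun s => w (y, s)) p.2) p.1
        = 2 * p.1 * deriv ζ p.2 := by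
      have e3 : (fun y => deriv (fun s => w (y, s)) p.2)
          = fun y => y ^ 2 * deriv ζ p.2 := by
        funext y
        have : (fun s => w (y, s)) = fun s => y ^ 2 * ζ s := by
          funext s; exact hw (y, s)
        rw [this]
        exact deriv_const_mul _ (hζdiff _ hpI)
      rw [e3]
      have : HasDerivAt (fun y : ℝ => y ^ 2 * deriv ζ p.2)
          (2 * p.1 * deriv ζ p.2) p.1 := by
        simpa [mul_comm, mul_assoc] using (hasDerivAt_pow 2 p.1).mul_const (deriv ζ p.2)
      exact this.deriv
    rw [f1, f2, f3]
    linear_combination p.1 ^ 2 * hode _ hpI
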